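/- Under the hypotheses of Theorem 3.3, Ω is an X-domain of holomorphy if and only if Ω is a weak X-domain of holomorphy. -/

import Mathlib

open Metric Set Filter
open scoped NNReal ENNReal

section AuxOneVariable

/-- Cauchy estimate for the coefficients of the Cauchy power series. -/
lemma aux_coef_bound {f : ℂ → ℂ} {c : ℂ} {R B : ℝ} (hR : 0 < R)
    (hc : ContinuousOn f (sphere c R))
    (hB : ∀ w ∈ sphere c R, ‖f w‖ ≤ B) (k : ℕ) :
    ‖cauchyPowerSeries f c R k‖ ≤ B / R ^ k := by
  have hsp : (c + R) ∈ sphere c R := by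
    simp [mem_sphere, dist_eq_norm, abs_of_pos hR]
  have hB0 : 0 ≤ B := le_trans (norm_nonneg _) (hB _ hsp)
  have hmem : ∀ θ : ℝ, circleMap c R θ ∈ sphere c R := fun θ => circleMap_mem_sphere c hR.le θ
  have hcont : Continuous fun θ : ℝ => ‖f (circleMap c R θ)‖ :=
    (hc.comp_continuous (continuous_circleMap c R) hmem).norm
  have hint : (∫ θ : ℝ in (0)..2 * Real.pi, ‖f (circleMap c R θ)‖) ≤ 2 * Real.pi * B := by
    have h1 : (∫ θ : ℝ in (0)..2 * Real.pi, ‖f (circleMap c R θ)‖) ≤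
        ∫ _θ : ℝ in (0)..2 * Real.pi, B := by
      apply intervalIntegral.integral_mono_on Real.two_pi_pos.le
        (hcont.intervalIntegrable _ _) intervalIntegrable_const
      intro θ _
      exact hB _ (hmem θ)
    simpa using h1
  calc ‖cauchyPowerSeries f c R k‖
      ≤ ((2 * Real.pi)⁻¹ * ∫ θ : ℝ in (0)..2 * Real.pi, ‖f (circleMap c R θ)‖) * |R|⁻¹ ^ k :=
        norm_cauchyPowerSeries_le f c R k
    _ ≤ ((2 * Real.pi)⁻¹ * (2 * Real.pi * B)) * |R|⁻¹ ^ k := by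
        gcongr
    _ = B / R ^ k := by
        rw [abs_of_pos hR]
        field_simp
        rw [mul_assoc, ← mul_pow, one_div, inv_mul_cancel₀ hR.ne', one_pow, mul_one]

/-- Propagation of uniform Cauchyness for bounded holomorphic sequences: from a small ball
to any point of a larger concentric ball contained in the domain. -/
lemma aux_propagate {U : Set ℂ} {φ : ℕ → ℂ → ℂ} {K : ℝ}
    (hd : ∀ n, DifferentiableOn ℂ (φ n) U) (hK : ∀ n, ∀ w ∈ U, ‖φ n w‖ ≤ K)
    {a : ℂ} {s ρ : ℝ} (hs : 0 < s) (hsρ : s < ρ) (hρ : ball a ρ ⊆ U)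
    (hcau : UniformCauchySeqOn φ atTop (closedBall a s))
    {z : ℂ} (hz : z ∈ ball a ρ) : CauchySeq fun n => φ n z := by
  have hK0 : 0 ≤ K := le_trans (norm_nonneg _) (hK 0 a (hρ (mem_ball_self (hs.trans hsρ))))
  set ρ' : ℝ := dist z a with hρ'def
  have hρ'0 : 0 ≤ ρ' := dist_nonneg
  have hρ'ρ : ρ' < ρ := hz
  set ρ'' : ℝ := (max ρ' s + ρ) / 2 with hρ''def
  have hmaxρ : max ρ' s < ρ := max_lt hρ'ρ hsρ
  have h1 : ρ' < ρ'' := lt_of_le_of_lt (le_max_left _ _) (by rw [hρ''def]; linarith)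
  have h2 : s < ρ'' := lt_of_le_of_lt (le_max_right _ _) (by rw [hρ''def]; linarith)
  have h3 : ρ'' < ρ := by rw [hρ''def]; linarith
  have hρ''0 : 0 < ρ'' := lt_of_le_of_lt hρ'0 h1
  clear_value ρ''
  have hcbU : closedBall a ρ'' ⊆ U := fun w hw =>
    hρ (mem_ball.2 (lt_of_le_of_lt (mem_closedBall.1 hw) h3))
  have hcbsU : closedBall a s ⊆ U := fun w hw =>
    hρ (mem_ball.2 (lt_of_le_of_lt (mem_closedBall.1 hw) (hsρ)))
  set θ : ℝ := ρ' / ρ'' with hθdef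
  have hθ0 : 0 ≤ θ := div_nonneg hρ'0 hρ''0.le
  have hθ1 : θ < 1 := (div_lt_one hρ''0).2 h1
  clear_value θ
  rw [Metric.cauchySeq_iff]
  intro ε hε
  -- choose the tail cutoff N
  obtain ⟨N, hN⟩ : ∃ N : ℕ, θ ^ N < (ε / 2) * (1 - θ) / (2 * K + 1) :=
    exists_pow_lt_of_lt_one (div_pos (mul_pos (by linarith) (by linarith)) (by linarith)) hθ1
  have htail : 2 * K * θ ^ N / (1 - θ) < ε / 2 := by
    rw [div_lt_iff₀ (by linarith)]
    have h2K : (0:ℝ) < 2 * K + 1 := by linarith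
    calc 2 * K * θ ^ N ≤ (2 * K + 1) * θ ^ N := by nlinarith [pow_nonneg hθ0 N]
      _ < (2 * K + 1) * ((ε / 2) * (1 - θ) / (2 * K + 1)) := by
          exact mul_lt_mul_of_pos_left hN h2K
      _ = ε / 2 * (1 - θ) := by field_simp
  set C : ℝ := ∑ k ∈ Finset.range N, (ρ' / s) ^ k with hCdef
  have hC0 : 0 ≤ C := Finset.sum_nonneg fun k _ => pow_nonneg (by positivity) k
  clear_value C
  set ε₁ : ℝ := (ε / 2) / (C + 1) with hε₁def
  have hε₁0 : 0 < ε₁ := by positivity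
  clear_value ε₁
  obtain ⟨N₀, hN₀⟩ := Metric.uniformCauchySeqOn_iff.1 hcau ε₁ hε₁0
  refine ⟨N₀, ?_⟩
  intro m hm n hn
  -- set up the difference function and its power series
  set ψ : ℂ → ℂ := fun w => φ m w - φ n w with hψdef
  have hψd : DifferentiableOn ℂ ψ U := (hd m).sub (hd n)
  have hψ2K : ∀ w ∈ U, ‖ψ w‖ ≤ 2 * K := by
    intro w hw
    calc ‖φ m w - φ n w‖ ≤ ‖φ m w‖ + ‖φ n w‖ := norm_sub_le _ _
      _ ≤ 2 * K := by have := hK m w hw; have := hK n w hw; linarith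
  have hψε₁ : ∀ w ∈ sphere a s, ‖ψ w‖ ≤ ε₁ := by
    intro w hw
    have := hN₀ m hm n hn w (sphere_subset_closedBall hw)
    rw [dist_eq_norm] at this
    exact this.le
  -- power series at radius ρ''
  have hRpos : (0:ℝ) < ρ''.toNNReal := by simpa [Real.toNNReal_pos] using hρ''0
  have hball_eq : (ρ''.toNNReal : ℝ) = ρ'' := Real.coe_toNNReal _ hρ''0.le
  have hp : HasFPowerSeriesOnBall ψ (cauchyPowerSeries ψ a ρ'') a ρ''.toNNReal := by
    have hmono : DifferentiableOn ℂ ψ (closedBall a ρ''.toNNReal) := by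
      rw [show ((ρ''.toNNReal : ℝ)) = ρ'' from hball_eq]
      exact hψd.mono hcbU
    have := hmono.hasFPowerSeriesOnBall hRpos
    rwa [hball_eq] at this
  have hq : HasFPowerSeriesOnBall ψ (cauchyPowerSeries ψ a s) a s.toNNReal := by
    have hspos : (0:ℝ) < s.toNNReal := by simpa [Real.toNNReal_pos] using hs
    have hseq : (s.toNNReal : ℝ) = s := Real.coe_toNNReal _ hs.le
    have hmono : DifferentiableOn ℂ ψ (closedBall a s.toNNReal) := by
      rw [show ((s.toNNReal : ℝ)) = s from hseq]
      exact hψd.mono hcbsU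
    have := hmono.hasFPowerSeriesOnBall hspos
    rwa [hseq] at this
  have huniq : cauchyPowerSeries ψ a s = cauchyPowerSeries ψ a ρ'' :=
    hq.hasFPowerSeriesAt.eq_formalMultilinearSeries hp.hasFPowerSeriesAt
  -- coefficient bounds
  have hcoef1 : ∀ k, ‖cauchyPowerSeries ψ a ρ'' k‖ ≤ 2 * K / ρ'' ^ k := by
    intro k
    apply aux_coef_bound hρ''0 (hψd.continuousOn.mono ?_) (fun w hw => hψ2K w ?_) k
    · exact fun w hw => hcbU (sphere_subset_closedBall hw)
    · exact hcbU (sphere_subset_closedBall hw)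
  have hcoef2 : ∀ k, ‖cauchyPowerSeries ψ a ρ'' k‖ ≤ ε₁ / s ^ k := by
    intro k
    rw [← huniq]
    apply aux_coef_bound hs (hψd.continuousOn.mono ?_) hψε₁ k
    exact fun w hw => hcbsU (sphere_subset_closedBall hw)
  -- evaluate at z
  set u : ℂ := z - a with hudef
  have hu : ‖u‖ = ρ' := by rw [hudef, hρ'def, dist_eq_norm]
  have humem : u ∈ Metric.eball (0:ℂ) ρ''.toNNReal := by
    rw [Metric.mem_eball, edist_dist, dist_zero_right, hu]
    exact (ENNReal.ofReal_lt_ofReal_iff hρ''0).2 h1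
  have hsum : HasSum (fun k => cauchyPowerSeries ψ a ρ'' k fun _ => u) (ψ z) := by
    have := hp.hasSum humem
    rwa [show a + u = z by rw [hudef]; ring] at this
  -- term bounds
  set g : ℕ → ℝ := fun k => ‖cauchyPowerSeries ψ a ρ'' k fun _ => u‖ with hgdef
  have hterm : ∀ k, g k ≤ ‖cauchyPowerSeries ψ a ρ'' k‖ * ρ' ^ k := by
    intro k
    calc g k ≤ ‖cauchyPowerSeries ψ a ρ'' k‖ * ∏ _i : Fin k, ‖u‖ :=
          (cauchyPowerSeries ψ a ρ'' k).le_opNorm _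
      _ = ‖cauchyPowerSeries ψ a ρ'' k‖ * ρ' ^ k := by
          rw [Finset.prod_const, hu]; simp
  have hg1 : ∀ k, g k ≤ 2 * K * θ ^ k := by
    intro k
    calc g k ≤ (2 * K / ρ'' ^ k) * ρ' ^ k := le_trans (hterm k)
          (mul_le_mul_of_nonneg_right (hcoef1 k) (pow_nonneg hρ'0 k))
      _ = 2 * K * θ ^ k := by
          have hne : ρ'' ^ k ≠ 0 := (pow_pos hρ''0 k).ne'
          rw [hθdef, div_pow]
          rw [div_mul_eq_mul_div, mul_div_assoc]
  have hg2 : ∀ k, g k ≤ ε₁ * (ρ' / s) ^ k := by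
    intro k
    calc g k ≤ (ε₁ / s ^ k) * ρ' ^ k := le_trans (hterm k)
          (mul_le_mul_of_nonneg_right (hcoef2 k) (pow_nonneg hρ'0 k))
      _ = ε₁ * (ρ' / s) ^ k := by rw [div_pow, div_mul_eq_mul_div, mul_div_assoc]
  have hgeo : Summable fun k : ℕ => 2 * K * θ ^ k :=
    (summable_geometric_of_lt_one hθ0 hθ1).mul_left _
  have hgsum : Summable g :=
    Summable.of_nonneg_of_le (fun k => norm_nonneg _) hg1 hgeo
  -- assemble
  have hval : dist (φ m z) (φ n z) = ‖ψ z‖ := by rw [dist_eq_norm, hψdef]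
  rw [hval]
  have hnorm : ‖ψ z‖ ≤ ∑' k, g k := by
    rw [← hsum.tsum_eq]
    exact norm_tsum_le_tsum_norm hgsum
  have hsplit : ∑' k, g k = (∑ k ∈ Finset.range N, g k) + ∑' k, g (k + N) :=
    (Summable.sum_add_tsum_nat_add N hgsum).symm
  have hhead : (∑ k ∈ Finset.range N, g k) ≤ ε / 2 := by
    calc (∑ k ∈ Finset.range N, g k) ≤ ∑ k ∈ Finset.range N, ε₁ * (ρ' / s) ^ k :=
          Finset.sum_le_sum fun k _ => hg2 k
      _ = ε₁ * C := by rw [hCdef, Finset.mul_sum]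
      _ ≤ ε₁ * (C + 1) := by nlinarith [hε₁0]
      _ = ε / 2 := by rw [hε₁def]; field_simp
  have htail2 : (∑' k, g (k + N)) ≤ 2 * K * θ ^ N / (1 - θ) := by
    have hsum2 : Summable fun k : ℕ => 2 * K * θ ^ (k + N) := by
      exact_mod_cast (summable_nat_add_iff N).2 hgeo
    calc (∑' k, g (k + N)) ≤ ∑' k, 2 * K * θ ^ (k + N) :=
          Summable.tsum_le_tsum (fun k => hg1 (k + N)) ((summable_nat_add_iff N).2 hgsum) hsum2
      _ = 2 * K * θ ^ N * ∑' k, θ ^ k := by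
          rw [← tsum_mul_left]
          congr 1; funext k
          rw [pow_add]; ring
      _ = 2 * K * θ ^ N / (1 - θ) := by
          rw [tsum_geometric_of_lt_one hθ0 hθ1]
          field_simp
  calc ‖ψ z‖ ≤ (∑ k ∈ Finset.range N, g k) + ∑' k, g (k + N) := by rw [← hsplit]; exact hnorm
    _ ≤ ε / 2 + 2 * K * θ ^ N / (1 - θ) := add_le_add hhead htail2
    _ < ε / 2 + ε / 2 := by linarith
    _ = ε := by ring

end AuxOneVariable

section AuxGeneral

variable {E : Type*} [NormedAddCommGroup E] [NormedSpace ℂ E]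

/-- Cauchy estimate for the Fréchet derivative of a bounded holomorphic function. -/
lemma aux_fderiv_bound {E : Type*} [NormedAddCommGroup E] [NormedSpace ℂ E]
    {U : Set E} (hU : IsOpen U) {h : E → ℂ} (hd : DifferentiableOn ℂ h U)
    {K r : ℝ} (hr : 0 < r) (hK : ∀ w ∈ U, ‖h w‖ ≤ K) {z : E}
    (hz : closedBall z r ⊆ U) : ‖fderiv ℂ h z‖ ≤ K / r := by
  have hzU : z ∈ U := hz (mem_closedBall_self hr.le)
  have hK0 : 0 ≤ K := le_trans (norm_nonneg _) (hK z hzU)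
  refine ContinuousLinearMap.opNorm_le_bound _ (div_nonneg hK0 hr.le) ?_
  intro v
  rcases eq_or_ne v 0 with rfl | hv
  · simp
  have hc : 0 < ‖v‖ := norm_pos_iff.2 hv
  have hrc : 0 < r / ‖v‖ := div_pos hr hc
  set ψ : ℂ → E := fun t => z + t • v with hψ
  have hψd : Differentiable ℂ ψ :=
    ((ContinuousLinearMap.toSpanSingleton ℂ v).differentiable).const_add z
  set V : Set ℂ := ψ ⁻¹' U with hV
  have hVo : IsOpen V := hU.preimage hψd.continuous
  have hφd : DifferentiableOn ℂ (h ∘ ψ) V :=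
    hd.comp hψd.differentiableOn (fun t ht => ht)
  have hdist : ∀ t : ℂ, dist (ψ t) z = ‖t‖ * ‖v‖ := by
    intro t; rw [dist_eq_norm]; simp [hψ, norm_smul]
  have hball : closedBall (0:ℂ) (r / ‖v‖) ⊆ V := by
    intro t ht
    have : ‖t‖ ≤ r / ‖v‖ := by simpa using ht
    have : dist (ψ t) z ≤ r := by
      rw [hdist]
      calc ‖t‖ * ‖v‖ ≤ (r / ‖v‖) * ‖v‖ := by gcongr
        _ = r := div_mul_cancel₀ _ hc.ne'
    exact hz this
  have hder : HasDerivAt (h ∘ ψ) (fderiv ℂ h z v) 0 := by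
    have h1 : HasFDerivAt h (fderiv ℂ h z) (ψ 0) := by
      have : ψ 0 = z := by simp [hψ]
      rw [this]
      exact (hd.differentiableAt (hU.mem_nhds hzU)).hasFDerivAt
    have h2 : HasDerivAt ψ v 0 := by
      have : HasDerivAt (fun t : ℂ => t • v) v 0 := by
        simpa using (hasDerivAt_id (0:ℂ)).smul_const v
      simpa [hψ] using this.const_add z
    simpa using h1.comp_hasDerivAt 0 h2
  have hbd : ‖Complex.cderiv (r / ‖v‖) (h ∘ ψ) 0‖ ≤ K / (r / ‖v‖) := by
    apply Complex.norm_cderiv_le hrc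
    intro t ht
    have htn : ‖t‖ = r / ‖v‖ := by simpa using ht
    apply hK
    apply hz
    have : dist (ψ t) z = r := by rw [hdist, htn, div_mul_cancel₀ _ hc.ne']
    simp [mem_closedBall, this]
  rw [Complex.cderiv_eq_deriv hVo hφd hrc hball] at hbd
  rw [hder.deriv] at hbd
  calc ‖fderiv ℂ h z v‖ ≤ K / (r / ‖v‖) := hbd
    _ = K / r * ‖v‖ := by field_simp

/-- Pointwise Cauchy + uniform bound implies uniformly Cauchy on a smaller ball. -/
lemma aux_unif_of_pointwise [ProperSpace E]
    {φ : ℕ → E → ℂ} {K : ℝ} {a : E} {δ : ℝ} {U : Set E} (hU : IsOpen U)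
    (hd : ∀ n, DifferentiableOn ℂ (φ n) U)
    (hK : ∀ n, ∀ w ∈ U, ‖φ n w‖ ≤ K) (hδ : 0 < δ) (hball : ball a δ ⊆ U)
    (hpt : ∀ z ∈ ball a δ, CauchySeq fun n => φ n z) :
    UniformCauchySeqOn φ atTop (closedBall a (δ/4)) := by
  have hsub2 : ball a (δ/2) ⊆ ball a δ := ball_subset_ball (by linarith)
  have hK0 : 0 ≤ K := by
    have := hK 0 a (hball (mem_ball_self hδ))
    exact le_trans (norm_nonneg _) this
  set L : ℝ := K / (δ/4) with hL
  have hL0 : 0 ≤ L := div_nonneg hK0 (by linarith)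
  -- Lipschitz bound on ball a (δ/2)
  have hLip : ∀ n, ∀ x ∈ ball a (δ/2), ∀ y ∈ ball a (δ/2),
      ‖φ n y - φ n x‖ ≤ L * ‖y - x‖ := by
    intro n x hx y hy
    have hdiff : ∀ w ∈ ball a (δ/2), DifferentiableAt ℂ (φ n) w := fun w hw =>
      ((hd n).mono hball).differentiableAt (isOpen_ball.mem_nhds (hsub2 hw))
    have hbound : ∀ w ∈ ball a (δ/2), ‖fderiv ℂ (φ n) w‖ ≤ L := by
      intro w hw
      refine aux_fderiv_bound isOpen_ball ((hd n).mono hball) (by linarith)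
        (fun u hu => hK n u (hball hu)) ?_
      intro u hu
      have h1 : dist u w ≤ δ/4 := hu
      have h2 : dist w a < δ/2 := hw
      exact mem_ball.2 (lt_of_le_of_lt (dist_triangle u w a) (by linarith))
    exact (convex_ball a (δ/2)).norm_image_sub_le_of_norm_fderiv_le hdiff hbound hx hy
  rw [Metric.uniformCauchySeqOn_iff]
  intro ε hε
  set η : ℝ := ε / (3 * (L + 1)) with hη
  have hη0 : 0 < η := by positivity
  -- finite η-net of the compact ball with centers inside it
  obtain ⟨t, hts, htfin, htcover⟩ :=
    totallyBounded_iff_subset.1 (isCompact_closedBall a (δ/4)).totallyBounded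
      _ (Metric.dist_mem_uniformity hη0)
  have hNex : ∀ y ∈ t, ∃ N : ℕ, ∀ m ≥ N, ∀ n ≥ N, dist (φ m y) (φ n y) < ε/3 := by
    intro y hy
    have hyb : y ∈ ball a δ := by
      have := hts hy
      exact mem_ball.2 (lt_of_le_of_lt (mem_closedBall.1 this) (by linarith))
    exact Metric.cauchySeq_iff.1 (hpt y hyb) (ε/3) (by positivity)
  choose! N hN using hNex
  refine ⟨htfin.toFinset.sup N, ?_⟩
  intro m hm n hn x hx
  obtain ⟨y, hy, hxy⟩ := mem_iUnion₂.1 (htcover hx)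
  have hxy' : dist x y < η := hxy
  have hyN : htfin.toFinset.sup N ≥ N y := Finset.le_sup (htfin.mem_toFinset.2 hy)
  have hmid : dist (φ m y) (φ n y) < ε/3 := hN y hy m (le_trans hyN hm) n (le_trans hyN hn)
  have hx2 : x ∈ ball a (δ/2) :=
    mem_ball.2 (lt_of_le_of_lt (mem_closedBall.1 hx) (by linarith))
  have hy2 : y ∈ ball a (δ/2) :=
    mem_ball.2 (lt_of_le_of_lt (mem_closedBall.1 (hts hy)) (by linarith))
  have e1 : dist (φ m x) (φ m y) ≤ L * η := by
    rw [dist_eq_norm]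
    calc ‖φ m x - φ m y‖ ≤ L * ‖x - y‖ := hLip m y hy2 x hx2
      _ ≤ L * η := by
          have : ‖x - y‖ ≤ η := le_of_lt (by rwa [← dist_eq_norm])
          exact mul_le_mul_of_nonneg_left this hL0
  have e2 : dist (φ n y) (φ n x) ≤ L * η := by
    rw [dist_eq_norm]
    calc ‖φ n y - φ n x‖ ≤ L * ‖y - x‖ := hLip n x hx2 y hy2
      _ ≤ L * η := by
          have : ‖y - x‖ ≤ η := le_of_lt (by rwa [← dist_eq_norm, dist_comm])
          exact mul_le_mul_of_nonneg_left this hL0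
  have hLη : L * η ≤ ε/3 := by
    have h1 : L * η ≤ (L+1) * η := by nlinarith [hη0.le]
    have h2 : (L+1) * η = ε/3 := by
      rw [hη]; field_simp
    linarith
  calc dist (φ m x) (φ n x) ≤ dist (φ m x) (φ m y) + dist (φ m y) (φ n y) + dist (φ n y) (φ n x) :=
        dist_triangle4 _ _ _ _
    _ < ε/3 + ε/3 + ε/3 := by
        have := e1; have := e2
        linarith
    _ = ε := by ring

/-- Vitali-type theorem: a uniformly bounded sequence of holomorphic functions on a ball
which is pointwise Cauchy on a sub-ball is pointwise Cauchy everywhere. -/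
lemma aux_vitali {F : ℕ → E → ℂ} {K : ℝ} {c₂ : E} {r₂ : ℝ}
    (hd : ∀ n, DifferentiableOn ℂ (F n) (ball c₂ r₂))
    (hK : ∀ n, ∀ w ∈ ball c₂ r₂, ‖F n w‖ ≤ K)
    {c₁ : E} {r₁ : ℝ} (hr₁ : 0 < r₁)
    (hsub : ball c₁ r₁ ⊆ ball c₂ r₂)
    (hpt : ∀ z ∈ ball c₁ r₁, CauchySeq fun n => F n z) :
    ∀ z ∈ ball c₂ r₂, CauchySeq fun n => F n z := by
  intro z' hz'
  by_cases hzc : z' = c₁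
  · subst hzc; exact hpt z' (mem_ball_self hr₁)
  set v : E := z' - c₁ with hv
  have hv0 : v ≠ 0 := sub_ne_zero.2 hzc
  have hvn : 0 < ‖v‖ := norm_pos_iff.2 hv0
  set ψ : ℂ → E := fun t => c₁ + t • v with hψ
  have hψd : Differentiable ℂ ψ := (differentiable_id.smul_const v).const_add c₁
  have hψc : Continuous ψ := hψd.continuous
  set T : Set ℂ := ψ ⁻¹' (ball c₂ r₂) with hT
  have hTo : IsOpen T := isOpen_ball.preimage hψc
  have hT0 : (0:ℂ) ∈ T := by
    simp only [hT, mem_preimage, hψ]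
    simpa using hsub (mem_ball_self hr₁)
  have hT1 : (1:ℂ) ∈ T := by
    simp only [hT, mem_preimage, hψ]
    simpa [hv] using hz'
  have hTconv : Convex ℝ T := by
    intro x hx y hy σ τ hσ hτ hστ
    have key : ψ (σ • x + τ • y) = σ • ψ x + τ • ψ y := by
      simp only [hψ]
      have h2 : σ • (c₁ + x • v) + τ • (c₁ + y • v)
          = (σ + τ) • c₁ + (σ • x + τ • y) • v := by
        rw [smul_add, smul_add, add_smul, add_smul, ← smul_assoc, ← smul_assoc]
        abel
      rw [h2, hστ, one_smul]
    simp only [hT, mem_preimage] at hx hy ⊢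
    rw [key]
    exact convex_ball c₂ r₂ hx hy hσ hτ hστ
  set Φ : ℕ → ℂ → ℂ := fun n t => F n (ψ t) with hΦ
  have hΦd : ∀ n, DifferentiableOn ℂ (Φ n) T := fun n =>
    (hd n).comp hψd.differentiableOn (fun t ht => ht)
  have hΦK : ∀ n, ∀ t ∈ T, ‖Φ n t‖ ≤ K := fun n t ht => hK n (ψ t) ht
  have hΦpt : ∀ t ∈ ball (0:ℂ) (r₁ / ‖v‖), CauchySeq fun n => Φ n t := by
    intro t ht
    apply hpt
    have : dist (ψ t) c₁ = ‖t‖ * ‖v‖ := by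
      rw [dist_eq_norm]; simp [hψ, norm_smul]
    rw [mem_ball, this]
    calc ‖t‖ * ‖v‖ < (r₁ / ‖v‖) * ‖v‖ := by
          have := mem_ball.1 ht
          rw [dist_zero_right] at this
          exact mul_lt_mul_of_pos_right this hvn
      _ = r₁ := div_mul_cancel₀ _ hvn.ne'
  -- the set of points near which Φ is uniformly Cauchy
  set A : Set ℂ := {t | t ∈ T ∧ ∃ s > 0, closedBall t s ⊆ T ∧
    UniformCauchySeqOn Φ atTop (closedBall t s)} with hA
  have hAopen : IsOpen A := by
    rw [Metric.isOpen_iff]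
    rintro t ⟨htT, s, hs0, hsT, hscau⟩
    refine ⟨s, hs0, ?_⟩
    intro t'' ht''
    have hd'' : dist t'' t < s := ht''
    refine ⟨hsT (mem_closedBall.2 ?_), s - dist t'' t, by linarith, ?_, ?_⟩
    · exact hd''.le
    · intro w hw
      apply hsT
      have : dist w t ≤ dist w t'' + dist t'' t := dist_triangle _ _ _
      have hw' : dist w t'' ≤ s - dist t'' t := hw
      exact mem_closedBall.2 (by linarith)
    · apply hscau.mono
      intro w hw
      have : dist w t ≤ dist w t'' + dist t'' t := dist_triangle _ _ _
      have hw' : dist w t'' ≤ s - dist t'' t := hw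
      exact mem_closedBall.2 (by linarith)
  have hprop : ∀ t'' ∈ A, ∀ (ρt : ℝ), 0 < ρt → ball t'' ρt ⊆ T →
      ∀ z ∈ ball t'' ρt, CauchySeq fun n => Φ n z := by
    rintro t'' ⟨ht''T, s'', hs''0, hs''T, hs''cau⟩ ρt hρt hρtT z hz
    refine aux_propagate hΦd hΦK (a := t'') (s := min s'' (ρt/2) / 2)
      (by positivity) ?_ hρtT ?_ hz
    · have h1 := min_le_right s'' (ρt/2)
      have h2 := min_le_left s'' (ρt/2)
      have h3 : 0 < min s'' (ρt/2) := lt_min hs''0 (by linarith)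
      linarith
    · apply hs''cau.mono
      intro w hw
      have hw' : dist w t'' ≤ min s'' (ρt/2) / 2 := hw
      have := min_le_left s'' (ρt/2)
      exact mem_closedBall.2 (by linarith)
  have hcompl : IsOpen (T \ A) := by
    rw [Metric.isOpen_iff]
    rintro t ⟨htT, htA⟩
    obtain ⟨ρt, hρt0, hρtT⟩ := Metric.isOpen_iff.1 hTo t htT
    refine ⟨ρt/4, by linarith, ?_⟩
    intro t'' ht''
    have hd'' : dist t'' t < ρt/4 := ht''
    constructor
    · exact hρtT (mem_ball.2 (by linarith))
    · intro ht''A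
      apply htA
      -- propagate from t'' back to a neighbourhood of t
      have hb2 : ball t'' (ρt/2) ⊆ T := by
        intro w hw
        apply hρtT
        have : dist w t ≤ dist w t'' + dist t'' t := dist_triangle _ _ _
        have hw' : dist w t'' < ρt/2 := hw
        exact mem_ball.2 (by linarith)
      have hptnear : ∀ z ∈ ball t (ρt/4), CauchySeq fun n => Φ n z := by
        intro z hz
        refine hprop t'' ht''A (ρt/2) (by linarith) hb2 z ?_
        have : dist z t'' ≤ dist z t + dist t t'' := dist_triangle _ _ _
        have hz' : dist z t < ρt/4 := hz
        rw [dist_comm t t''] at this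
        exact mem_ball.2 (by linarith)
      have hcau := aux_unif_of_pointwise hTo hΦd hΦK (a := t) (δ := ρt/4)
        (by linarith) (fun w hw => hρtT (ball_subset_ball (by linarith) hw)) hptnear
      refine ⟨htT, ρt/4/4, by linarith, ?_, hcau⟩
      intro w hw
      apply hρtT
      have hw' : dist w t ≤ ρt/4/4 := hw
      exact mem_ball.2 (by linarith)
  have h0A : (0:ℂ) ∈ A := by
    obtain ⟨d₀, hd₀0, hd₀T⟩ := Metric.isOpen_iff.1 hTo 0 hT0
    set δ₀ : ℝ := min (r₁ / ‖v‖) d₀ with hδ₀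
    have hδ₀0 : 0 < δ₀ := lt_min (by positivity) hd₀0
    have hδ₀T : ball (0:ℂ) δ₀ ⊆ T := fun w hw =>
      hd₀T (ball_subset_ball (min_le_right _ _) hw)
    have hcau := aux_unif_of_pointwise hTo hΦd hΦK hδ₀0 hδ₀T
      (fun z hz => hΦpt z (ball_subset_ball (min_le_left _ _) hz))
    refine ⟨hT0, δ₀/4, by linarith, ?_, hcau⟩
    intro w hw
    apply hδ₀T
    have hw' : dist w 0 ≤ δ₀/4 := hw
    exact mem_ball.2 (by linarith)
  have h1A : (1:ℂ) ∈ A := by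
    by_contra h1A
    have hpre : IsPreconnected T := hTconv.isPreconnected
    obtain ⟨x, hx⟩ := hpre A (T \ A) hAopen hcompl
      (fun t ht => by by_cases h : t ∈ A; exact Or.inl h; exact Or.inr ⟨ht, h⟩)
      ⟨0, hT0, h0A⟩ ⟨1, hT1, hT1, h1A⟩
    exact hx.2.2.2 hx.2.1
  obtain ⟨-, s, hs0, -, hscau⟩ := h1A
  have : CauchySeq fun n => Φ n 1 := by
    rw [Metric.cauchySeq_iff]
    intro ε hε
    obtain ⟨N, hN⟩ := Metric.uniformCauchySeqOn_iff.1 hscau ε hε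
    exact ⟨N, fun m hm n hn => hN m hm n hn 1 (mem_closedBall_self hs0.le)⟩
  have hψ1 : ψ 1 = z' := by simp [hψ, hv]
  simpa [hΦ, hψ1] using this

/-- The pointwise limit of a bounded, pointwise-Cauchy sequence of holomorphic functions
is holomorphic, bounded by the same bound, and is the pointwise limit. -/
lemma aux_limit [ProperSpace E] {F : ℕ → E → ℂ} {K : ℝ} {c₂ : E} {r₂ : ℝ}
    (hd : ∀ n, DifferentiableOn ℂ (F n) (ball c₂ r₂))
    (hK : ∀ n, ∀ w ∈ ball c₂ r₂, ‖F n w‖ ≤ K)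
    (hpt : ∀ z ∈ ball c₂ r₂, CauchySeq fun n => F n z) :
    ∃ G : E → ℂ, DifferentiableOn ℂ G (ball c₂ r₂) ∧ (∀ z ∈ ball c₂ r₂, ‖G z‖ ≤ K) ∧
      ∀ z ∈ ball c₂ r₂, Tendsto (fun n => F n z) atTop (nhds (G z)) := by
  set G : E → ℂ := fun z => limUnder atTop fun n => F n z with hG
  have htend : ∀ z ∈ ball c₂ r₂, Tendsto (fun n => F n z) atTop (nhds (G z)) := fun z hz =>
    (hpt z hz).tendsto_limUnder
  refine ⟨G, ?_, ?_, htend⟩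
  · -- differentiability
    intro z hz
    obtain ⟨R, hR0, hRsub⟩ := Metric.isOpen_iff.1 isOpen_ball z hz
    set r : ℝ := R/8 with hr
    have hr0 : 0 < r := by positivity
    have h8 : ball z (8*r) ⊆ ball c₂ r₂ := by
      rw [show 8*r = R by rw [hr]; ring]; exact hRsub
    -- uniform Cauchy of the functions on closedBall z (2r)
    have hcau : UniformCauchySeqOn F atTop (closedBall z (2*r)) := by
      have := aux_unif_of_pointwise isOpen_ball hd hK (a := z) (δ := 8*r) (by linarith)
        h8 (fun w hw => hpt w (h8 hw))
      rwa [show 8*r/4 = 2*r by ring] at this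
    -- uniform Cauchy of the derivatives on ball z r
    have hdcau : UniformCauchySeqOn (fun n w => fderiv ℂ (F n) w) atTop (ball z r) := by
      rw [Metric.uniformCauchySeqOn_iff]
      intro ε hε
      obtain ⟨N, hN⟩ := Metric.uniformCauchySeqOn_iff.1 hcau ((ε/2) * r) (by positivity)
      refine ⟨N, ?_⟩
      intro m hm n hn w hw
      have hsub2 : ball z (2*r) ⊆ ball c₂ r₂ :=
        (ball_subset_ball (by linarith)).trans h8
      have hdiff : DifferentiableOn ℂ (fun x => F m x - F n x) (ball z (2*r)) :=
        ((hd m).mono hsub2).sub ((hd n).mono hsub2)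
      have hbd : ∀ x ∈ ball z (2*r), ‖F m x - F n x‖ ≤ (ε/2) * r := by
        intro x hx
        have := hN m hm n hn x (ball_subset_closedBall hx)
        rw [dist_eq_norm] at this
        exact this.le
      have hcb : closedBall w r ⊆ ball z (2*r) := by
        intro x hx
        have h1 : dist x w ≤ r := hx
        have h2 : dist w z < r := hw
        exact mem_ball.2 (lt_of_le_of_lt (dist_triangle x w z) (by linarith))
      have key : ‖fderiv ℂ (fun x => F m x - F n x) w‖ ≤ (ε/2) * r / r :=
        aux_fderiv_bound isOpen_ball hdiff hr0 hbd hcb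
      have hfd : fderiv ℂ (fun x => F m x - F n x) w
          = fderiv ℂ (F m) w - fderiv ℂ (F n) w := by
        apply fderiv_sub
        · exact ((hd m).mono hsub2).differentiableAt
            (isOpen_ball.mem_nhds (mem_ball.2 (lt_trans hw (by linarith))))
        · exact ((hd n).mono hsub2).differentiableAt
            (isOpen_ball.mem_nhds (mem_ball.2 (lt_trans hw (by linarith))))
      rw [dist_eq_norm, ← hfd]
      calc ‖fderiv ℂ (fun x => F m x - F n x) w‖ ≤ (ε/2) * r / r := key
        _ = ε/2 := by field_simp
        _ < ε := by linarith
    -- pointwise limit of derivatives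
    have hdpt : ∀ w ∈ ball z r, CauchySeq fun n => fderiv ℂ (F n) w := by
      intro w hw
      rw [Metric.cauchySeq_iff]
      intro ε hε
      obtain ⟨N, hN⟩ := Metric.uniformCauchySeqOn_iff.1 hdcau ε hε
      exact ⟨N, fun m hm n hn => hN m hm n hn w hw⟩
    set G' : E → (E →L[ℂ] ℂ) := fun w => limUnder atTop fun n => fderiv ℂ (F n) w with hG'
    have hdtend : ∀ w ∈ ball z r, Tendsto (fun n => fderiv ℂ (F n) w) atTop (nhds (G' w)) :=
      fun w hw => (hdpt w hw).tendsto_limUnder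
    have hunif : TendstoUniformlyOn (fun n w => fderiv ℂ (F n) w) G' atTop (ball z r) :=
      hdcau.tendstoUniformlyOn_of_tendsto hdtend
    have hder : HasFDerivAt G (G' z) z := by
      apply hasFDerivAt_of_tendstoUniformlyOn isOpen_ball hunif
        (fun n w hw => ?_) (fun w hw => htend w (hRsub (ball_subset_ball (by linarith) hw)))
        (mem_ball_self hr0)
      exact ((hd n).differentiableAt (isOpen_ball.mem_nhds
        (hRsub (ball_subset_ball (by linarith) hw)))).hasFDerivAt
    exact hder.differentiableAt.differentiableWithinAt
  · intro z hz
    have := (htend z hz).norm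
    exact le_of_tendsto this (Eventually.of_forall fun n => hK n z hz)

end AuxGeneral

/-- `f` is extendable in the sense of Riemann domains from the domain `Ω`. -/
def ExtendableRiemann {d : ℕ} (Ω : Set (EuclideanSpace ℂ (Fin d)))
    (f : EuclideanSpace ℂ (Fin d) → ℂ) : Prop :=
  ∃ (c₁ c₂ : EuclideanSpace ℂ (Fin d)) (r₁ r₂ : ℝ), 0 < r₁ ∧ 0 < r₂ ∧
    closedBall c₁ r₁ ⊆ ball c₂ r₂ ∩ Ω ∧
    (ball c₂ r₂ ∩ Ω).Nonempty ∧ (ball c₂ r₂ ∩ Ωᶜ).Nonempty ∧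
    ∃ (F : EuclideanSpace ℂ (Fin d) → ℂ) (M : ℝ),
      DifferentiableOn ℂ F (ball c₂ r₂) ∧
      (∀ z ∈ ball c₂ r₂, ‖F z‖ ≤ M) ∧
      EqOn F f (ball c₁ r₁)

/-- The set of `f ∈ X` whose restriction has a bounded-by-`M` extension is closed. -/
lemma aux_closed {d : ℕ} {Ω : Set (EuclideanSpace ℂ (Fin d))}
    {X : Type*} [AddCommGroup X] [Module ℂ X] [MetricSpace X]
    (ι : X →ₗ[ℂ] (EuclideanSpace ℂ (Fin d) → ℂ))
    (hptw : ∀ (g : ℕ → X) (f : X), Tendsto g atTop (nhds f) →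
      ∀ z ∈ Ω, Tendsto (fun n => ι (g n) z) atTop (nhds (ι f z)))
    (c₁ c₂ : EuclideanSpace ℂ (Fin d)) (r₁ r₂ M : ℝ) (hr₁ : 0 < r₁)
    (hsub : ball c₁ r₁ ⊆ ball c₂ r₂) (hsubΩ : ball c₁ r₁ ⊆ Ω) :
    IsClosed {f : X | ∃ F, DifferentiableOn ℂ F (ball c₂ r₂) ∧
      (∀ z ∈ ball c₂ r₂, ‖F z‖ ≤ M) ∧ EqOn F (ι f) (ball c₁ r₁)} := by
  apply IsSeqClosed.isClosed
  intro g f hg hlim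
  choose F hFd hFb hFe using hg
  have hpt₁ : ∀ z ∈ ball c₁ r₁, CauchySeq fun n => F n z := by
    intro z hz
    have heq : (fun n => F n z) = fun n => ι (g n) z := funext fun n => hFe n hz
    rw [heq]
    exact (hptw g f hlim z (hsubΩ hz)).cauchySeq
  have hptall := aux_vitali hFd hFb hr₁ hsub hpt₁
  obtain ⟨G, hGd, hGb, hGt⟩ := aux_limit hFd hFb hptall
  refine ⟨G, hGd, hGb, ?_⟩
  intro z hz
  have t1 := hGt z (hsub hz)
  have t2 : Tendsto (fun n => F n z) atTop (nhds (ι f z)) := by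
    have heq : (fun n => F n z) = fun n => ι (g n) z := funext fun n => hFe n hz
    rw [heq]
    exact hptw g f hlim z (hsubΩ hz)
  exact tendsto_nhds_unique t1 t2

/-- If `f` is extendable, it is extendable via a pair with centers in a dense set `D`,
rational radii and a natural-number bound. -/
lemma aux_reduction {d : ℕ} {Ω : Set (EuclideanSpace ℂ (Fin d))}
    {D : Set (EuclideanSpace ℂ (Fin d))} (hD : Dense D)
    {f : EuclideanSpace ℂ (Fin d) → ℂ} (hf : ExtendableRiemann Ω f) :
    ∃ c₁' ∈ D, ∃ c₂' ∈ D, ∃ (r₁' r₂' : ℚ) (N : ℕ),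
      (0 < (r₁' : ℝ) ∧ 0 < (r₂' : ℝ) ∧
        closedBall c₁' (r₁' : ℝ) ⊆ ball c₂' (r₂' : ℝ) ∩ Ω ∧
        (ball c₂' (r₂' : ℝ) ∩ Ω).Nonempty ∧ (ball c₂' (r₂' : ℝ) ∩ Ωᶜ).Nonempty) ∧
      ∃ F, DifferentiableOn ℂ F (ball c₂' (r₂' : ℝ)) ∧
        (∀ z ∈ ball c₂' (r₂' : ℝ), ‖F z‖ ≤ (N : ℝ)) ∧ EqOn F f (ball c₁' (r₁' : ℝ)) := by
  obtain ⟨c₁, c₂, r₁, r₂, hr₁, hr₂, hsub, hne1, hne2, F, M, hFd, hFb, hFe⟩ := hf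
  obtain ⟨w, hw⟩ := hne2
  -- maximum of dist to c₂ on the compact closed ball
  obtain ⟨z₀, hz₀, hmax⟩ := (isCompact_closedBall c₁ r₁).exists_isMaxOn
    ⟨c₁, mem_closedBall_self hr₁.le⟩ ((continuous_id.dist continuous_const).continuousOn)
  set m : ℝ := dist z₀ c₂ with hm
  have hmlt : m < r₂ := (hsub hz₀).1
  have hm0 : 0 ≤ m := dist_nonneg
  have hwlt : dist w c₂ < r₂ := hw.1
  set ε : ℝ := min (r₂ - m) (r₂ - dist w c₂) / 4 with hε
  have hε0 : 0 < ε := by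
    apply div_pos _ (by norm_num)
    exact lt_min (by linarith) (by linarith)
  have hεm : m ≤ r₂ - 4*ε := by
    have := min_le_left (r₂ - m) (r₂ - dist w c₂)
    rw [hε]; linarith
  have hεw : dist w c₂ ≤ r₂ - 4*ε := by
    have := min_le_right (r₂ - m) (r₂ - dist w c₂)
    rw [hε]; linarith
  -- pick c₂' and r₂'
  obtain ⟨c₂', hc₂'D, hc₂'⟩ := hD.exists_mem_open isOpen_ball ⟨c₂, mem_ball_self hε0⟩
  have hc₂'d : dist c₂' c₂ < ε := hc₂'
  obtain ⟨r₂', hr₂'1, hr₂'2⟩ := exists_rat_btwn (show r₂ - 2*ε < r₂ - ε by linarith)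
  -- pick c₁' and r₁'
  obtain ⟨c₁', hc₁'D, hc₁'⟩ := hD.exists_mem_open isOpen_ball
    ⟨c₁, mem_ball_self (show 0 < r₁/4 by linarith)⟩
  have hc₁'d : dist c₁' c₁ < r₁/4 := hc₁'
  obtain ⟨r₁', hr₁'1, hr₁'2⟩ := exists_rat_btwn (show r₁/4 < r₁/2 by linarith)
  obtain ⟨N, hN⟩ := exists_nat_ge M
  have hr₂'pos : (0:ℝ) < (r₂' : ℝ) := by linarith
  have hr₁'pos : (0:ℝ) < (r₁' : ℝ) := by linarith
  -- key inclusions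
  have hb2sub : ball c₂' (r₂' : ℝ) ⊆ ball c₂ r₂ := by
    intro z hz
    have h1 : dist z c₂' < (r₂' : ℝ) := hz
    have := dist_triangle z c₂' c₂
    exact mem_ball.2 (by linarith)
  have hcb2 : closedBall c₁ r₁ ⊆ ball c₂' (r₂' : ℝ) := by
    intro z hz
    have h1 : dist z c₂ ≤ m := hmax hz
    have := dist_triangle z c₂ c₂'
    rw [dist_comm c₂ c₂'] at this
    exact mem_ball.2 (by linarith)
  have hw' : w ∈ ball c₂' (r₂' : ℝ) := by
    have := dist_triangle w c₂ c₂'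
    rw [dist_comm c₂ c₂'] at this
    exact mem_ball.2 (by linarith)
  have hcb1 : closedBall c₁' (r₁' : ℝ) ⊆ ball c₁ r₁ := by
    intro z hz
    have h1 : dist z c₁' ≤ (r₁' : ℝ) := hz
    have := dist_triangle z c₁' c₁
    exact mem_ball.2 (by linarith)
  have hb1 : ball c₁' (r₁' : ℝ) ⊆ ball c₁ r₁ :=
    ball_subset_closedBall.trans hcb1
  refine ⟨c₁', hc₁'D, c₂', hc₂'D, r₁', r₂', N,
    ⟨hr₁'pos, hr₂'pos, ?_, ?_, ⟨w, hw', hw.2⟩⟩, F, hFd.mono hb2sub, ?_, hFe.mono hb1⟩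
  · intro z hz
    have h1 : z ∈ ball c₁ r₁ := hcb1 hz
    have h2 : z ∈ closedBall c₁ r₁ := ball_subset_closedBall h1
    exact ⟨hcb2 h2, (hsub h2).2⟩
  · refine ⟨c₁', ?_⟩
    have h2 : c₁' ∈ closedBall c₁ r₁ :=
      ball_subset_closedBall (hcb1 (mem_closedBall_self hr₁'pos.le))
    exact ⟨hcb2 h2, (hsub h2).2⟩
  · intro z hz
    exact le_trans (hFb z (hb2sub hz)) hN

theorem stmt9 {d : ℕ} (Ω : Set (EuclideanSpace ℂ (Fin d)))
    (hΩo : IsOpen Ω) (hΩc : IsConnected Ω)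
    (X : Type*) [AddCommGroup X] [Module ℂ X] [MetricSpace X] [CompleteSpace X]
    [IsTopologicalAddGroup X] [ContinuousSMul ℂ X]
    (ι : X →ₗ[ℂ] (EuclideanSpace ℂ (Fin d) → ℂ)) (hinj : Function.Injective ι)
    (hholo : ∀ f : X, DifferentiableOn ℂ (ι f) Ω)
    (hptw : ∀ (g : ℕ → X) (f : X), Tendsto g atTop (nhds f) →
      ∀ z ∈ Ω, Tendsto (fun n => ι (g n) z) atTop (nhds (ι f z)))
    :
    (∃ f : X, ¬ ExtendableRiemann Ω (ι f)) ↔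
    (∀ (c₁ c₂ : EuclideanSpace ℂ (Fin d)) (r₁ r₂ : ℝ), 0 < r₁ → 0 < r₂ →
      closedBall c₁ r₁ ⊆ ball c₂ r₂ ∩ Ω →
      (ball c₂ r₂ ∩ Ω).Nonempty → (ball c₂ r₂ ∩ Ωᶜ).Nonempty →
      ∃ f : X, ¬ ∃ (F : EuclideanSpace ℂ (Fin d) → ℂ) (M : ℝ),
        DifferentiableOn ℂ F (ball c₂ r₂) ∧
        (∀ z ∈ ball c₂ r₂, ‖F z‖ ≤ M) ∧
        EqOn F (ι f) (ball c₁ r₁)) := by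
  classical
  constructor
  · rintro ⟨f, hf⟩ c₁ c₂ r₁ r₂ hr₁ hr₂ hsub hne1 hne2
    refine ⟨f, fun hex => hf ?_⟩
    obtain ⟨F, M, h1, h2, h3⟩ := hex
    exact ⟨c₁, c₂, r₁, r₂, hr₁, hr₂, hsub, hne1, hne2, F, M, h1, h2, h3⟩
  · intro hyp
    by_contra hno
    push_neg at hno
    obtain ⟨D, hDc, hDd⟩ := TopologicalSpace.exists_countable_dense (EuclideanSpace ℂ (Fin d))
    haveI : Countable ↥D := hDc.to_subtype
    -- the admissibility predicate
    set Adm : EuclideanSpace ℂ (Fin d) → EuclideanSpace ℂ (Fin d) → ℝ → ℝ → Prop :=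
      fun c₁ c₂ r₁ r₂ => 0 < r₁ ∧ 0 < r₂ ∧ closedBall c₁ r₁ ⊆ ball c₂ r₂ ∩ Ω ∧
        (ball c₂ r₂ ∩ Ω).Nonempty ∧ (ball c₂ r₂ ∩ Ωᶜ).Nonempty with hAdm
    -- the countable family of closed sets
    set T : ↥D × ↥D × ℚ × ℚ × ℕ → Set X := fun p =>
      if Adm (p.1 : EuclideanSpace ℂ (Fin d)) (p.2.1 : EuclideanSpace ℂ (Fin d))
          (p.2.2.1 : ℝ) (p.2.2.2.1 : ℝ) then
        {f : X | ∃ F, DifferentiableOn ℂ F (ball (p.2.1 : EuclideanSpace ℂ (Fin d))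
            (p.2.2.2.1 : ℝ)) ∧
          (∀ z ∈ ball (p.2.1 : EuclideanSpace ℂ (Fin d)) (p.2.2.2.1 : ℝ),
            ‖F z‖ ≤ (p.2.2.2.2 : ℝ)) ∧
          EqOn F (ι f) (ball (p.1 : EuclideanSpace ℂ (Fin d)) (p.2.2.1 : ℝ))}
      else ∅ with hTdef
    have hclosed : ∀ p, IsClosed (T p) := by
      intro p
      by_cases h : Adm (p.1 : EuclideanSpace ℂ (Fin d)) (p.2.1 : EuclideanSpace ℂ (Fin d))
          (p.2.2.1 : ℝ) (p.2.2.2.1 : ℝ)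
      · have : T p = _ := if_pos h
        rw [hTdef] at this ⊢
        simp only [if_pos h]
        obtain ⟨h1, h2, h3, h4, h5⟩ := h
        have hb : ball (p.1 : EuclideanSpace ℂ (Fin d)) (p.2.2.1 : ℝ) ⊆
            closedBall (p.1 : EuclideanSpace ℂ (Fin d)) (p.2.2.1 : ℝ) := ball_subset_closedBall
        exact aux_closed ι hptw _ _ _ _ _ h1
          (fun z hz => (h3 (hb hz)).1) (fun z hz => (h3 (hb hz)).2)
      · simp only [hTdef, if_neg h]; exact isClosed_empty
    have hcover : ⋃ p, T p = univ := by
      rw [eq_univ_iff_forall]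
      intro f
      obtain ⟨c₁', hc₁'D, c₂', hc₂'D, r₁', r₂', N, hadm, hext⟩ :=
        aux_reduction hDd (hno f)
      rw [mem_iUnion]
      refine ⟨⟨⟨c₁', hc₁'D⟩, ⟨c₂', hc₂'D⟩, r₁', r₂', N⟩, ?_⟩
      simp only [hTdef]
      rw [if_pos hadm]
      exact hext
    haveI : Nonempty X := ⟨0⟩
    obtain ⟨p, hpint⟩ := nonempty_interior_of_iUnion_of_closed hclosed hcover
    -- derive a contradiction
    by_cases hadm : Adm (p.1 : EuclideanSpace ℂ (Fin d)) (p.2.1 : EuclideanSpace ℂ (Fin d))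
        (p.2.2.1 : ℝ) (p.2.2.2.1 : ℝ)
    · obtain ⟨h1, h2, h3, h4, h5⟩ := hadm
      obtain ⟨h, hh⟩ := hyp _ _ _ _ h1 h2 h3 h4 h5
      set c₁' : EuclideanSpace ℂ (Fin d) := (p.1 : EuclideanSpace ℂ (Fin d))
      set c₂' : EuclideanSpace ℂ (Fin d) := (p.2.1 : EuclideanSpace ℂ (Fin d))
      set r₁' : ℝ := (p.2.2.1 : ℝ)
      set r₂' : ℝ := (p.2.2.2.1 : ℝ)
      set NM : ℝ := (p.2.2.2.2 : ℝ)
      have hTP : T p = {f : X | ∃ F, DifferentiableOn ℂ F (ball c₂' r₂') ∧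
          (∀ z ∈ ball c₂' r₂', ‖F z‖ ≤ NM) ∧ EqOn F (ι f) (ball c₁' r₁')} := by
        simp only [hTdef]
        rw [if_pos (⟨h1, h2, h3, h4, h5⟩ : Adm _ _ _ _)]
      obtain ⟨x₀, hx₀⟩ := hpint
      obtain ⟨ε, hε0, hεball⟩ := Metric.mem_nhds_iff.1 (mem_interior_iff_mem_nhds.1 hx₀)
      have hx₀T : x₀ ∈ T p := interior_subset hx₀
      -- find a small real t with x₀ + t • h ∈ T p
      have hcont : Continuous fun τ : ℝ => x₀ + (τ : ℂ) • h := by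
        exact continuous_const.add ((Complex.continuous_ofReal.smul continuous_const))
      have htend : Tendsto (fun τ : ℝ => x₀ + (τ : ℂ) • h) (nhds 0) (nhds x₀) := by
        have := hcont.tendsto 0
        simpa using this
      have hev : ∀ᶠ τ : ℝ in nhds 0, x₀ + (τ : ℂ) • h ∈ ball x₀ ε :=
        htend (ball_mem_nhds x₀ hε0)
      obtain ⟨δ, hδ0, hδ⟩ := Metric.eventually_nhds_iff.1 hev
      set t : ℝ := δ/2 with ht
      have ht0 : (0:ℝ) < t := by linarith
      have htmem : x₀ + (t : ℂ) • h ∈ T p := by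
        apply hεball
        apply hδ
        rw [Real.dist_eq, sub_zero, abs_of_pos ht0]
        linarith
      rw [hTP] at hx₀T htmem
      obtain ⟨F₀, hF₀d, hF₀b, hF₀e⟩ := hx₀T
      obtain ⟨F₁, hF₁d, hF₁b, hF₁e⟩ := htmem
      apply hh
      have hdiv : DifferentiableOn ℂ (fun z => (F₁ z - F₀ z) / (t : ℂ)) (ball c₂' r₂') :=
        by
          simp only [div_eq_mul_inv]
          exact (hF₁d.sub hF₀d).mul_const _
      refine ⟨fun z => (F₁ z - F₀ z) / (t : ℂ), (2 * NM) / t, hdiv, ?_, ?_⟩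
      · intro z hz
        have hnt : ‖(t:ℂ)‖ = t := by
          rw [Complex.norm_real, Real.norm_eq_abs, abs_of_pos ht0]
        rw [norm_div, hnt]
        gcongr
        calc ‖F₁ z - F₀ z‖ ≤ ‖F₁ z‖ + ‖F₀ z‖ := norm_sub_le _ _
          _ ≤ 2 * NM := by
              have := hF₁b z hz; have := hF₀b z hz; linarith
      · intro z hz
        have he1 : F₁ z = ι (x₀ + (t:ℂ) • h) z := hF₁e hz
        have he0 : F₀ z = ι x₀ z := hF₀e hz
        have hlin : ι (x₀ + (t:ℂ) • h) z = ι x₀ z + (t:ℂ) * ι h z := by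
          rw [map_add, map_smul]
          simp [Pi.add_apply, Pi.smul_apply, smul_eq_mul]
        have hτ0 : (t:ℂ) ≠ 0 := by
          simp only [ne_eq, Complex.ofReal_eq_zero]
          exact ht0.ne'
        show (F₁ z - F₀ z) / (t:ℂ) = ι h z
        rw [he1, he0, hlin]
        field_simp
        ring
    · simp only [hTdef, if_neg hadm] at hpint
      simp at hpint
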